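/- Let n ≥ 1 and let S be a real 2n×2n symplectic matrix with det(S − I) ≠ 0. Then the symplectic Cayley transform M_S = ½ J (S + I)(S − I)⁻¹ is a symmetric matrix: M_S = M_Sᵀ. -/

import Mathlib

open Matrix

section Aux

variable {n : ℕ} (S : Matrix (Fin n ⊕ Fin n) (Fin n ⊕ Fin n) ℝ)

lemma auxJ2 : (Matrix.fromBlocks 0 1 (-1) 0 : Matrix (Fin n ⊕ Fin n) (Fin n ⊕ Fin n) ℝ) *
    (Matrix.fromBlocks 0 1 (-1) 0) = -1 := by
  simp [Matrix.fromBlocks_multiply, ← Matrix.fromBlocks_one, Matrix.fromBlocks_neg]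

lemma auxJT : (Matrix.fromBlocks 0 1 (-1) 0 : Matrix (Fin n ⊕ Fin n) (Fin n ⊕ Fin n) ℝ)ᵀ =
    -(Matrix.fromBlocks 0 1 (-1) 0) := by
  simp [Matrix.fromBlocks_transpose, Matrix.fromBlocks_neg]

end Aux

/-- For a symplectic `2n×2n` matrix `S` (i.e. `S J Sᵀ = J`) with
`det(S − I) ≠ 0`, the symplectic Cayley transform `M_S = ½ J (S + I)(S − I)⁻¹`
is symmetric. -/
theorem symplectic_cayley_transform_isSymm
    (n : ℕ) (hn : 1 ≤ n)
    (S : Matrix (Fin n ⊕ Fin n) (Fin n ⊕ Fin n) ℝ)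
    (hS : S * (Matrix.fromBlocks 0 1 (-1) 0) * Sᵀ = Matrix.fromBlocks 0 1 (-1) 0)
    (hdet : (S - 1).det ≠ 0) :
    ((1 / 2 : ℝ) • ((Matrix.fromBlocks 0 1 (-1) 0) * (S + 1) * (S - 1)⁻¹)).IsSymm := by
  set J : Matrix (Fin n ⊕ Fin n) (Fin n ⊕ Fin n) ℝ := Matrix.fromBlocks 0 1 (-1) 0 with hJ
  have hJ2 : J * J = -1 := auxJ2
  have hJT : Jᵀ = -J := auxJT
  -- J is invertible with inverse -J
  have hJinv : Invertible J := ⟨-J, by rw [neg_mul, hJ2, neg_neg], by rw [mul_neg, hJ2, neg_neg]⟩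
  have hJunit : IsUnit J.det := (Matrix.isUnit_iff_isUnit_det J).mp (isUnit_of_invertible J)
  -- S is invertible
  have hdetS : IsUnit S.det := by
    have h1 : S.det * J.det * Sᵀ.det = J.det := by
      rw [← Matrix.det_mul, ← Matrix.det_mul, hS]
    rw [Matrix.det_transpose] at h1
    have hJd : J.det ≠ 0 := hJunit.ne_zero
    have h2 : S.det * S.det = 1 := by
      apply mul_left_cancel₀ hJd
      rw [mul_one]; linear_combination h1
    exact IsUnit.of_mul_eq_one _ h2
  have hSinv : Invertible S := S.invertibleOfIsUnitDet hdetS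
  have hSTinv : Invertible Sᵀ := Sᵀ.invertibleOfIsUnitDet (by rwa [Matrix.det_transpose])
  -- Sᵀ J S = J
  have hSJS : Sᵀ * J * S = J := by
    have h1 : J * Sᵀ = S⁻¹ * J := by
      have := congrArg (fun M => S⁻¹ * M) hS
      simpa [Matrix.mul_assoc, Matrix.inv_mul_of_invertible, Matrix.inv_mul_cancel_left_of_invertible] using this
    have h2 : Sᵀ = -(J * (S⁻¹ * J)) := by
      have := congrArg (fun M => J * M) h1
      rw [← Matrix.mul_assoc, hJ2] at this
      calc Sᵀ = -(-1 * Sᵀ) := by simp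
        _ = -(J * (S⁻¹ * J)) := by rw [this]
    calc Sᵀ * J * S = -(J * (S⁻¹ * J)) * J * S := by rw [← h2]
      _ = -(J * (S⁻¹ * (J * J)) * S) := by simp [Matrix.mul_assoc]
      _ = -(J * (S⁻¹ * (-1)) * S) := by rw [hJ2]
      _ = J * (S⁻¹ * S) := by simp [Matrix.mul_assoc]
      _ = J := by simp [Matrix.inv_mul_of_invertible]
  -- key identity
  have key : (Sᵀ - 1) * (J * (S + 1)) = -((Sᵀ + 1) * (J * (S - 1))) := by
    have e : Sᵀ * (J * S) = J := by rw [← Matrix.mul_assoc, hSJS]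
    simp only [Matrix.mul_add, Matrix.add_mul, Matrix.mul_sub, Matrix.sub_mul,
      Matrix.mul_one, Matrix.one_mul, ← Matrix.mul_assoc] at *
    rw [hSJS]
    abel
  have hAinv : Invertible (S - 1) := (S - 1).invertibleOfIsUnitDet (isUnit_iff_ne_zero.mpr hdet)
  have hATinv : Invertible (Sᵀ - 1) := by
    have : Sᵀ - 1 = (S - 1)ᵀ := by simp [Matrix.transpose_sub]
    rw [this]
    exact (S - 1)ᵀ.invertibleOfIsUnitDet (by rw [Matrix.det_transpose]; exact isUnit_iff_ne_zero.mpr hdet)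
  -- main equality
  have main : J * (S + 1) * (S - 1)⁻¹ = (Sᵀ - 1)⁻¹ * (Sᵀ + 1) * (-J) := by
    have h1 : (Sᵀ - 1) * (J * (S + 1) * (S - 1)⁻¹) = -((Sᵀ + 1) * J) * ((S - 1) * (S - 1)⁻¹) := by
      rw [← Matrix.mul_assoc, key]
      simp [Matrix.mul_assoc]
    rw [Matrix.mul_inv_of_invertible, Matrix.mul_one] at h1
    have h2 := congrArg (fun M => (Sᵀ - 1)⁻¹ * M) h1
    rw [← Matrix.mul_assoc, Matrix.inv_mul_of_invertible, Matrix.one_mul] at h2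
    rw [h2]
    simp [Matrix.mul_assoc, Matrix.mul_neg, Matrix.neg_mul]
  unfold Matrix.IsSymm
  rw [Matrix.transpose_smul, Matrix.transpose_mul, Matrix.transpose_mul,
    Matrix.transpose_nonsing_inv, Matrix.transpose_add, Matrix.transpose_one, hJT]
  rw [main]
  congr 1
  simp [Matrix.transpose_sub, Matrix.mul_assoc]
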